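/- For any Boolean function f: {0,1}^n → {0,1}, the distance of f from monotonicity times 2^n equals the size of the largest matching in the violation graph of f. Here the distance from monotonicity is ε(f) = min over monotone g of Pr_{x uniform}[f(x) ≠ g(x)]. -/

import Mathlib

/-- A violating pair of `f`: `x < y` coordinatewise but `f x = 1 > 0 = f y`. -/
def ViolPair {n : ℕ} (f : (Fin n → Bool) → Bool) (x y : Fin n → Bool) : Prop :=
  x < y ∧ f x = true ∧ f y = false

/-- A matching in the violation graph: a set of violating pairs that are pairwise
vertex-disjoint. -/
def IsViolMatching {n : ℕ} (f : (Fin n → Bool) → Bool)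
    (M : Finset ((Fin n → Bool) × (Fin n → Bool))) : Prop :=
  (∀ e ∈ M, ViolPair f e.1 e.2) ∧
    ∀ e ∈ M, ∀ e' ∈ M, e ≠ e' →
      e.1 ≠ e'.1 ∧ e.1 ≠ e'.2 ∧ e.2 ≠ e'.1 ∧ e.2 ≠ e'.2

namespace ViolAux

variable {n : ℕ}

/-- A vertex cover of the violation graph. -/
def IsCover (f : (Fin n → Bool) → Bool) (C : Finset (Fin n → Bool)) : Prop :=
  ∀ x y, ViolPair f x y → x ∈ C ∨ y ∈ C

lemma exists_min_cover (f : (Fin n → Bool) → Bool) :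
    ∃ C, IsCover f C ∧ ∀ C', IsCover f C' → C.card ≤ C'.card := by
  classical
  have h : ∃ k, ∃ C : Finset (Fin n → Bool), IsCover f C ∧ C.card = k :=
    ⟨_, Finset.univ, fun x y _ => Or.inl (Finset.mem_univ x), rfl⟩
  obtain ⟨C, hC, hk⟩ := Nat.find_spec h
  exact ⟨C, hC, fun C' hC' => hk ▸ Nat.find_min' h ⟨C', hC', rfl⟩⟩

/-- Easy direction: any matching is at most the disagreement set of any monotone `g`. -/
lemma matching_le (f g : (Fin n → Bool) → Bool) (hg : Monotone g)
    (M : Finset ((Fin n → Bool) × (Fin n → Bool))) (hM : IsViolMatching f M) :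
    M.card ≤ (Finset.univ.filter fun x => f x ≠ g x).card := by
  classical
  apply Finset.card_le_card_of_injOn (fun e => if f e.1 ≠ g e.1 then e.1 else e.2)
  · intro e he
    obtain ⟨hlt, hfx, hfy⟩ := hM.1 e he
    simp only [Finset.mem_coe, Finset.mem_filter, Finset.mem_univ, true_and]
    split_ifs with h
    · exact h
    · push_neg at h
      have h1 : g e.1 = true := h ▸ hfx
      have h2 : g e.1 ≤ g e.2 := hg hlt.le
      rw [h1] at h2
      have : g e.2 = true := by
        cases hge : g e.2 with
        | false => rw [hge] at h2; exact absurd h2 (by simp)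
        | true => rfl
      rw [hfy, this]; simp
  · intro e he e' he' heq
    by_contra hne
    obtain ⟨h1, h2, h3, h4⟩ := hM.2 e (by simpa using he) e' (by simpa using he') hne
    dsimp only at heq
    split_ifs at heq <;> [exact h1 heq; exact h2 heq; exact h3 heq; exact h4 heq]

/-- Flipping `f` on a minimal vertex cover makes it monotone. -/
lemma flip_monotone (f : (Fin n → Bool) → Bool) (C : Finset (Fin n → Bool))
    (hC : IsCover f C)
    (hmin : ∀ c ∈ C, ∃ x y, ViolPair f x y ∧ ((x = c ∧ y ∉ C) ∨ (y = c ∧ x ∉ C))) :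
    Monotone (fun x => if x ∈ C then !f x else f x) := by
  classical
  intro u v huv
  by_contra hcon
  have hgu : (if u ∈ C then !f u else f u) = true := by
    by_contra h
    simp only [Bool.not_eq_true] at h
    exact hcon (by show (if u ∈ C then !f u else f u) ≤ _; rw [h]; exact Bool.false_le _)
  have hgv : (if v ∈ C then !f v else f v) = false := by
    by_contra h
    simp only [Bool.not_eq_false] at h
    exact hcon (by show _ ≤ (if v ∈ C then !f v else f v); rw [h]; exact Bool.le_true _)
  have huv' : u ≠ v := by rintro rfl; rw [hgu] at hgv; simp at hgv
  have hlt : u < v := lt_of_le_of_ne huv huv'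
  by_cases hu : u ∈ C <;> by_cases hv : v ∈ C
  · -- both in C
    rw [if_pos hu] at hgu; rw [if_pos hv] at hgv
    have hfu : f u = false := by cases h : f u <;> simp [h] at hgu ⊢
    have hfv : f v = true := by cases h : f v <;> simp [h] at hgv ⊢
    obtain ⟨x, y, ⟨hxy, hfx, hfy⟩, hcase⟩ := hmin u hu
    have hzu : x < u ∧ x ∉ C := by
      rcases hcase with ⟨rfl, _⟩ | ⟨rfl, hx⟩
      · rw [hfu] at hfx; exact absurd hfx (by simp)
      · exact ⟨hxy, hx⟩
    obtain ⟨x', y', ⟨hxy', hfx', hfy'⟩, hcase'⟩ := hmin v hv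
    have hwv : v < y' ∧ y' ∉ C := by
      rcases hcase' with ⟨rfl, hy⟩ | ⟨rfl, _⟩
      · exact ⟨hxy', hy⟩
      · rw [hfv] at hfy'; exact absurd hfy' (by simp)
    have hviol : ViolPair f x y' := ⟨lt_trans (lt_of_lt_of_le hzu.1 huv) hwv.1, hfx, hfy'⟩
    rcases hC _ _ hviol with h | h
    · exact hzu.2 h
    · exact hwv.2 h
  · -- u ∈ C, v ∉ C
    rw [if_pos hu] at hgu; rw [if_neg hv] at hgv
    have hfu : f u = false := by cases h : f u <;> simp [h] at hgu ⊢
    obtain ⟨x, y, ⟨hxy, hfx, hfy⟩, hcase⟩ := hmin u hu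
    have hzu : x < u ∧ x ∉ C := by
      rcases hcase with ⟨rfl, _⟩ | ⟨rfl, hx⟩
      · rw [hfu] at hfx; exact absurd hfx (by simp)
      · exact ⟨hxy, hx⟩
    have hviol : ViolPair f x v := ⟨lt_of_lt_of_le hzu.1 huv, hfx, hgv⟩
    rcases hC _ _ hviol with h | h
    · exact hzu.2 h
    · exact hv h
  · -- u ∉ C, v ∈ C
    rw [if_neg hu] at hgu; rw [if_pos hv] at hgv
    have hfv : f v = true := by cases h : f v <;> simp [h] at hgv ⊢
    obtain ⟨x', y', ⟨hxy', hfx', hfy'⟩, hcase'⟩ := hmin v hv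
    have hwv : v < y' ∧ y' ∉ C := by
      rcases hcase' with ⟨rfl, hy⟩ | ⟨rfl, _⟩
      · exact ⟨hxy', hy⟩
      · rw [hfv] at hfy'; exact absurd hfy' (by simp)
    have hviol : ViolPair f u y' := ⟨lt_of_le_of_lt huv hwv.1, hgu, hfy'⟩
    rcases hC _ _ hviol with h | h
    · exact hu h
    · exact hwv.2 h
  · -- neither in C
    rw [if_neg hu] at hgu; rw [if_neg hv] at hgv
    rcases hC _ _ ⟨hlt, hgu, hgv⟩ with h | h
    · exact hu h
    · exact hv h

/-- König: a minimum vertex cover yields a matching of the same size. -/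
lemma konig (f : (Fin n → Bool) → Bool) (C : Finset (Fin n → Bool))
    (hC : IsCover f C) (hmin : ∀ C', IsCover f C' → C.card ≤ C'.card) :
    ∃ M, IsViolMatching f M ∧ M.card = C.card := by
  classical
  set C1 : Finset (Fin n → Bool) := C.filter (fun x => f x = true) with hC1def
  set C0 : Finset (Fin n → Bool) := C.filter (fun x => ¬ f x = true) with hC0def
  have hCsplit : C1.card + C0.card = C.card :=
    Finset.card_filter_add_card_filter_not (p := fun x => f x = true)
  -- neighborhoods
  set nb1 : (Fin n → Bool) → Finset (Fin n → Bool) :=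
    fun x => Finset.univ.filter (fun y => ViolPair f x y ∧ y ∉ C0) with hnb1
  set nb0 : (Fin n → Bool) → Finset (Fin n → Bool) :=
    fun y => Finset.univ.filter (fun x => ViolPair f x y ∧ x ∉ C1) with hnb0
  -- Hall condition for C1
  have hall1 : ∀ s : Finset {a // a ∈ C1}, s.card ≤ (s.biUnion (fun a => nb1 a.1)).card := by
    intro s
    by_contra hlt
    push_neg at hlt
    set S : Finset (Fin n → Bool) := s.image Subtype.val with hS
    have hScard : S.card = s.card := Finset.card_image_of_injective s Subtype.val_injective
    have hSsub : S ⊆ C1 := by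
      intro x hx
      obtain ⟨a, _, rfl⟩ := Finset.mem_image.mp hx
      exact a.2
    set N := s.biUnion (fun a => nb1 a.1) with hN
    set C' := (C1 \ S) ∪ N ∪ C0 with hC'
    have hcov : IsCover f C' := by
      intro x y hxy
      rcases hC x y hxy with hx | hy
      · have hx1 : x ∈ C1 := Finset.mem_filter.mpr ⟨hx, hxy.2.1⟩
        by_cases hxS : x ∈ S
        · by_cases hy0 : y ∈ C0
          · exact Or.inr (Finset.mem_union_right _ hy0)
          · obtain ⟨a, ha, rfl⟩ := Finset.mem_image.mp hxS
            refine Or.inr (Finset.mem_union_left _ (Finset.mem_union_right _ ?_))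
            exact Finset.mem_biUnion.mpr ⟨a, ha,
              Finset.mem_filter.mpr ⟨Finset.mem_univ _, hxy, hy0⟩⟩
        · exact Or.inl (Finset.mem_union_left _ (Finset.mem_union_left _
            (Finset.mem_sdiff.mpr ⟨hx1, hxS⟩)))
      · have : y ∈ C0 := Finset.mem_filter.mpr ⟨hy, by simp [hxy.2.2]⟩
        exact Or.inr (Finset.mem_union_right _ this)
    have h1 : C'.card ≤ (C1 \ S).card + N.card + C0.card :=
      le_trans (Finset.card_union_le _ _) (by gcongr; exact Finset.card_union_le _ _)
    have h2 : (C1 \ S).card = C1.card - S.card := Finset.card_sdiff_of_subset hSsub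
    have h3 : S.card ≤ C1.card := Finset.card_le_card hSsub
    have h4 : N.card < S.card := by rw [hScard]; exact hlt
    have hsmall : C'.card < C.card := by omega
    exact absurd (hmin C' hcov) (not_le.mpr hsmall)
  obtain ⟨m1, hm1inj, hm1mem⟩ :=
    (Finset.all_card_le_biUnion_card_iff_exists_injective (fun a : {a // a ∈ C1} => nb1 a.1)).mp
      hall1
  -- Hall condition for C0
  have hall0 : ∀ s : Finset {b // b ∈ C0}, s.card ≤ (s.biUnion (fun b => nb0 b.1)).card := by
    intro s
    by_contra hlt
    push_neg at hlt
    set S : Finset (Fin n → Bool) := s.image Subtype.val with hS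
    have hScard : S.card = s.card := Finset.card_image_of_injective s Subtype.val_injective
    have hSsub : S ⊆ C0 := by
      intro x hx
      obtain ⟨a, _, rfl⟩ := Finset.mem_image.mp hx
      exact a.2
    set N := s.biUnion (fun b => nb0 b.1) with hN
    set C' := C1 ∪ N ∪ (C0 \ S) with hC'
    have hcov : IsCover f C' := by
      intro x y hxy
      rcases hC x y hxy with hx | hy
      · have hx1 : x ∈ C1 := Finset.mem_filter.mpr ⟨hx, hxy.2.1⟩
        exact Or.inl (Finset.mem_union_left _ (Finset.mem_union_left _ hx1))
      · have hy0 : y ∈ C0 := Finset.mem_filter.mpr ⟨hy, by simp [hxy.2.2]⟩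
        by_cases hyS : y ∈ S
        · by_cases hx1 : x ∈ C1
          · exact Or.inl (Finset.mem_union_left _ (Finset.mem_union_left _ hx1))
          · obtain ⟨b, hb, rfl⟩ := Finset.mem_image.mp hyS
            refine Or.inl (Finset.mem_union_left _ (Finset.mem_union_right _ ?_))
            exact Finset.mem_biUnion.mpr ⟨b, hb,
              Finset.mem_filter.mpr ⟨Finset.mem_univ _, hxy, hx1⟩⟩
        · exact Or.inr (Finset.mem_union_right _ (Finset.mem_sdiff.mpr ⟨hy0, hyS⟩))
    have h1 : C'.card ≤ C1.card + N.card + (C0 \ S).card :=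
      le_trans (Finset.card_union_le _ _) (by gcongr; exact Finset.card_union_le _ _)
    have h2 : (C0 \ S).card = C0.card - S.card := Finset.card_sdiff_of_subset hSsub
    have h3 : S.card ≤ C0.card := Finset.card_le_card hSsub
    have h4 : N.card < S.card := by rw [hScard]; exact hlt
    have hsmall : C'.card < C.card := by omega
    exact absurd (hmin C' hcov) (not_le.mpr hsmall)
  obtain ⟨m0, hm0inj, hm0mem⟩ :=
    (Finset.all_card_le_biUnion_card_iff_exists_injective (fun b : {b // b ∈ C0} => nb0 b.1)).mp
      hall0
  -- facts about m1, m0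
  have hm1 : ∀ a : {a // a ∈ C1}, ViolPair f a.1 (m1 a) ∧ m1 a ∉ C0 := by
    intro a
    have := hm1mem a
    rw [hnb1] at this
    exact (Finset.mem_filter.mp this).2
  have hm0 : ∀ b : {b // b ∈ C0}, ViolPair f (m0 b) b.1 ∧ m0 b ∉ C1 := by
    intro b
    have := hm0mem b
    rw [hnb0] at this
    exact (Finset.mem_filter.mp this).2
  have hfC1 : ∀ a : {a // a ∈ C1}, f a.1 = true := fun a => (Finset.mem_filter.mp a.2).2
  have hfC0 : ∀ b : {b // b ∈ C0}, f b.1 = false := fun b => by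
    have := (Finset.mem_filter.mp b.2).2; simpa using this
  have hfm1 : ∀ a, f (m1 a) = false := fun a => (hm1 a).1.2.2
  have hfm0 : ∀ b, f (m0 b) = true := fun b => (hm0 b).1.2.1
  have hm1notC0 : ∀ a, m1 a ∉ C0 := fun a => (hm1 a).2
  have hm0notC1 : ∀ b, m0 b ∉ C1 := fun b => (hm0 b).2
  have haC1mem : ∀ a : {a // a ∈ C1}, a.1 ∈ C1 := fun a => a.2
  -- build the matching
  set M : Finset ((Fin n → Bool) × (Fin n → Bool)) :=
    (C1.attach.image fun a => (a.1, m1 a)) ∪ (C0.attach.image fun b => (m0 b, b.1)) with hMdef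
  have hmem : ∀ e ∈ M, (∃ a : {a // a ∈ C1}, e = (a.1, m1 a)) ∨
      (∃ b : {b // b ∈ C0}, e = (m0 b, b.1)) := by
    intro e he
    rcases Finset.mem_union.mp he with h | h
    · obtain ⟨a, _, rfl⟩ := Finset.mem_image.mp h; exact Or.inl ⟨a, rfl⟩
    · obtain ⟨b, _, rfl⟩ := Finset.mem_image.mp h; exact Or.inr ⟨b, rfl⟩
  refine ⟨M, ⟨?_, ?_⟩, ?_⟩
  · intro e he
    rcases hmem e he with ⟨a, rfl⟩ | ⟨b, rfl⟩
    · exact (hm1 a).1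
    · exact (hm0 b).1
  · intro e he e' he' hne
    rcases hmem e he with ⟨a, rfl⟩ | ⟨b, rfl⟩ <;> rcases hmem e' he' with ⟨a', rfl⟩ | ⟨b', rfl⟩ <;> dsimp only
    · have haa : a ≠ a' := fun h => hne (by rw [h])
      refine ⟨fun h => haa (Subtype.ext h), ?_, ?_, fun h => haa (hm1inj h)⟩
      · intro h; have := hfC1 a; rw [h, hfm1 a'] at this; exact absurd this (by simp)
      · intro h; have := hfm1 a; rw [h, hfC1 a'] at this; exact absurd this (by simp)
    · refine ⟨?_, ?_, ?_, ?_⟩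
      · intro h; exact hm0notC1 b' (h ▸ haC1mem a)
      · intro h; have := hfC1 a; rw [h, hfC0 b'] at this; exact absurd this (by simp)
      · intro h; have := hfm1 a; rw [h, hfm0 b'] at this; exact absurd this (by simp)
      · intro h; exact hm1notC0 a (h ▸ b'.2)
    · refine ⟨?_, ?_, ?_, ?_⟩
      · intro h; exact hm0notC1 b (h ▸ haC1mem a')
      · intro h; have := hfm0 b; rw [h, hfm1 a'] at this; exact absurd this (by simp)
      · intro h; have := hfC0 b; rw [h, hfC1 a'] at this; exact absurd this (by simp)
      · intro h; exact hm1notC0 a' (h ▸ b.2)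
    · have hbb : b ≠ b' := fun h => hne (by rw [h])
      refine ⟨fun h => hbb (hm0inj h), ?_, ?_, fun h => hbb (Subtype.ext h)⟩
      · intro h; have := hfm0 b; rw [h, hfC0 b'] at this; exact absurd this (by simp)
      · intro h; have := hfC0 b; rw [h, hfm0 b'] at this; exact absurd this (by simp)
  · rw [hMdef, Finset.card_union_of_disjoint, Finset.card_image_of_injective,
      Finset.card_image_of_injective, Finset.card_attach, Finset.card_attach, hCsplit]
    · intro b b' h
      exact hm0inj (congrArg Prod.fst h)
    · intro a a' h
      exact Subtype.ext (congrArg Prod.fst h)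
    · rw [Finset.disjoint_left]
      rintro e he he'
      obtain ⟨a, _, rfl⟩ := Finset.mem_image.mp he
      obtain ⟨b, _, hb⟩ := Finset.mem_image.mp he'
      have h1 : a.1 = m0 b := congrArg Prod.fst hb.symm
      exact hm0notC1 b (h1 ▸ haC1mem a)

end ViolAux

/-- The distance of `f` from monotonicity times `2^n` (i.e. the minimum, over monotone `g`,
of the number of points where `f` and `g` disagree) equals the size of the largest
matching in the violation graph of `f`. -/
theorem stmt1 (n : ℕ) (f : (Fin n → Bool) → Bool) :
    sInf {d : ℕ | ∃ g : (Fin n → Bool) → Bool, Monotone g ∧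
        d = (Finset.univ.filter fun x => f x ≠ g x).card}
      = sSup {m : ℕ | ∃ M, IsViolMatching f M ∧ M.card = m} := by
  classical
  set D := {d : ℕ | ∃ g : (Fin n → Bool) → Bool, Monotone g ∧
      d = (Finset.univ.filter fun x => f x ≠ g x).card} with hD
  set Nset := {m : ℕ | ∃ M, IsViolMatching f M ∧ M.card = m} with hNs
  have hDne : D.Nonempty := ⟨_, (fun _ => true), monotone_const, rfl⟩
  have hNbdd : BddAbove Nset := by
    refine ⟨Fintype.card ((Fin n → Bool) × (Fin n → Bool)), ?_⟩
    rintro m ⟨M, _, rfl⟩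
    simpa using Finset.card_le_univ M
  obtain ⟨C, hC, hmin⟩ := ViolAux.exists_min_cover f
  obtain ⟨M₀, hM₀, hM₀card⟩ := ViolAux.konig f C hC hmin
  -- minimality property (inclusion-minimal)
  have hminimal : ∀ c ∈ C, ∃ x y, ViolPair f x y ∧ ((x = c ∧ y ∉ C) ∨ (y = c ∧ x ∉ C)) := by
    intro c hc
    have hnot : ¬ ViolAux.IsCover f (C.erase c) := by
      intro hcov
      have := hmin _ hcov
      rw [Finset.card_erase_of_mem hc] at this
      have hpos : 0 < C.card := Finset.card_pos.mpr ⟨c, hc⟩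
      omega
    rw [ViolAux.IsCover] at hnot
    push_neg at hnot
    obtain ⟨x, y, hxy, hxn, hyn⟩ := hnot
    rcases hC x y hxy with hx | hy
    · have hxc : x = c := by
        by_contra h
        exact hxn (Finset.mem_erase.mpr ⟨h, hx⟩)
      refine ⟨x, y, hxy, Or.inl ⟨hxc, ?_⟩⟩
      intro hyC
      have : y ≠ c := by
        rintro rfl
        rw [hxc] at hxy
        exact absurd rfl (ne_of_lt hxy.1)
      exact hyn (Finset.mem_erase.mpr ⟨this, hyC⟩)
    · have hyc : y = c := by
        by_contra h
        exact hyn (Finset.mem_erase.mpr ⟨h, hy⟩)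
      refine ⟨x, y, hxy, Or.inr ⟨hyc, ?_⟩⟩
      intro hxC
      have : x ≠ c := by
        rintro rfl
        rw [hyc] at hxy
        exact absurd rfl (ne_of_lt hxy.1)
      exact hxn (Finset.mem_erase.mpr ⟨this, hxC⟩)
  set g : (Fin n → Bool) → Bool := fun x => if x ∈ C then !f x else f x with hg
  have hgmono : Monotone g := ViolAux.flip_monotone f C hC hminimal
  have hdle : (Finset.univ.filter fun x => f x ≠ g x).card ≤ C.card := by
    apply Finset.card_le_card
    intro x hx
    have hx' := (Finset.mem_filter.mp hx).2
    by_contra h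
    exact hx' (by rw [hg]; simp [h])
  apply le_antisymm
  · calc sInf D ≤ (Finset.univ.filter fun x => f x ≠ g x).card :=
          Nat.sInf_le ⟨g, hgmono, rfl⟩
      _ ≤ C.card := hdle
      _ = M₀.card := hM₀card.symm
      _ ≤ sSup Nset := le_csSup hNbdd ⟨M₀, hM₀, rfl⟩
  · obtain ⟨g', hg', hEq⟩ := Nat.sInf_mem hDne
    have hNne : Nset.Nonempty := ⟨0, ∅, ⟨fun e he => absurd he (Finset.notMem_empty e),
      fun e he => absurd he (Finset.notMem_empty e)⟩, rfl⟩
    apply csSup_le hNne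
    rintro m ⟨M, hM, rfl⟩
    rw [hEq]
    exact ViolAux.matching_le f g' hg' M hM
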